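/- Every maximal unbalanced collection on N contains exactly one member of each pair {S, N∖S} of complementary nonempty proper subsets; in particular every maximal unbalanced collection has cardinality 2^{n-1} - 1. -/
import Mathlib


open Finset

def Unbalanced {N : Type*} [Fintype N] [DecidableEq N] (Q : Finset (Finset N)) : Prop :=
  ¬ ∃ B ⊆ Q, ∃ lam : Finset N → ℝ, (∀ S ∈ B, 0 < lam S) ∧
      ∀ i : N, ∑ S ∈ B, lam S * (if i ∈ S then (1 : ℝ) else 0) = 1

lemma not_both_mem {N : Type*} [Fintype N] [DecidableEq N] {Q : Finset (Finset N)}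
    (hunb : Unbalanced Q) {S : Finset N} (hS : S.Nonempty) (hSQ : S ∈ Q)
    (hc : Finset.univ \ S ∈ Q) : False := by
  apply hunb
  refine ⟨{S, Finset.univ \ S}, ?_, fun _ => 1, fun T _ => one_pos, fun i => ?_⟩
  · intro T hT
    simp only [mem_insert, mem_singleton] at hT
    rcases hT with rfl | rfl <;> assumption
  · have hne : S ≠ Finset.univ \ S := by
      obtain ⟨x, hx⟩ := hS
      intro h
      have h2 : x ∈ Finset.univ \ S := h ▸ hx
      exact (Finset.mem_sdiff.mp h2).2 hx
    rw [Finset.sum_pair hne]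
    by_cases hi : i ∈ S <;> simp [hi]

lemma combine_aux {N : Type*} [Fintype N] [DecidableEq N] {Q : Finset (Finset N)}
    (hunb : Unbalanced Q) {S : Finset N} (hS : S.Nonempty) (hSu : S ≠ Finset.univ)
    (h1 : ¬ Unbalanced (insert S Q)) (h2 : ¬ Unbalanced (insert (Finset.univ \ S) Q)) :
    False := by
  rw [Unbalanced, not_not] at h1 h2
  obtain ⟨B₁, hB₁, lam, hlampos, hlamsum⟩ := h1
  obtain ⟨B₂, hB₂, mu, hmupos, hmusum⟩ := h2
  set Sc := Finset.univ \ S with hSc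
  have hScne : Sc.Nonempty := by
    rw [hSc, Finset.sdiff_nonempty]
    intro h
    exact hSu (Finset.univ_subset_iff.mp h)
  have hSB₁ : S ∈ B₁ := by
    by_contra h
    exact hunb ⟨B₁, fun T hT => (mem_insert.mp (hB₁ hT)).resolve_left
      (fun e => h (e ▸ hT)), lam, hlampos, hlamsum⟩
  have hScB₂ : Sc ∈ B₂ := by
    by_contra h
    exact hunb ⟨B₂, fun T hT => (mem_insert.mp (hB₂ hT)).resolve_left
      (fun e => h (e ▸ hT)), mu, hmupos, hmusum⟩
  have hl0 : 0 < lam S := hlampos S hSB₁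
  have hm0 : 0 < mu Sc := hmupos Sc hScB₂
  -- lam S ≤ 1
  obtain ⟨x, hx⟩ := hS
  have hl1 : lam S ≤ 1 := by
    have hle : lam S * (if x ∈ S then (1:ℝ) else 0)
        ≤ ∑ T ∈ B₁, lam T * (if x ∈ T then (1:ℝ) else 0) :=
      Finset.single_le_sum (f := fun T => lam T * (if x ∈ T then (1:ℝ) else 0))
        (fun T hT => mul_nonneg (hlampos T hT).le (by split_ifs <;> norm_num)) hSB₁
    rw [hlamsum x, if_pos hx, mul_one] at hle
    exact hle
  obtain ⟨y, hy⟩ := hScne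
  have hm1 : mu Sc ≤ 1 := by
    have hle : mu Sc * (if y ∈ Sc then (1:ℝ) else 0)
        ≤ ∑ T ∈ B₂, mu T * (if y ∈ T then (1:ℝ) else 0) :=
      Finset.single_le_sum (f := fun T => mu T * (if y ∈ T then (1:ℝ) else 0))
        (fun T hT => mul_nonneg (hmupos T hT).le (by split_ifs <;> norm_num)) hScB₂
    rw [hmusum y, if_pos hy, mul_one] at hle
    exact hle
  set c : ℝ := lam S + mu Sc - lam S * mu Sc with hcdef
  have hc : 0 < c := by nlinarith
  set B : Finset (Finset N) := (B₁.erase S) ∪ (B₂.erase Sc) with hBdef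
  have hBQ : B ⊆ Q := by
    intro T hT
    rcases Finset.mem_union.mp hT with h | h
    · exact (mem_insert.mp (hB₁ (Finset.mem_of_mem_erase h))).resolve_left
        (Finset.ne_of_mem_erase h)
    · exact (mem_insert.mp (hB₂ (Finset.mem_of_mem_erase h))).resolve_left
        (Finset.ne_of_mem_erase h)
  set w : Finset N → ℝ := fun T =>
    (1/c) * (mu Sc * (if T ∈ B₁.erase S then lam T else 0)
      + lam S * (if T ∈ B₂.erase Sc then mu T else 0)) with hwdef
  apply hunb
  refine ⟨B, hBQ, w, ?_, ?_⟩
  · intro T hT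
    have ha : 0 ≤ mu Sc * (if T ∈ B₁.erase S then lam T else 0) := by
      split_ifs with h
      · exact mul_nonneg hm0.le (hlampos T (Finset.mem_of_mem_erase h)).le
      · simp
    have hb : 0 ≤ lam S * (if T ∈ B₂.erase Sc then mu T else 0) := by
      split_ifs with h
      · exact mul_nonneg hl0.le (hmupos T (Finset.mem_of_mem_erase h)).le
      · simp
    have hpos : 0 < mu Sc * (if T ∈ B₁.erase S then lam T else 0)
        + lam S * (if T ∈ B₂.erase Sc then mu T else 0) := by
      rcases Finset.mem_union.mp hT with h | h
      · refine lt_of_lt_of_le ?_ (le_add_of_nonneg_right hb)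
        rw [if_pos h]
        exact mul_pos hm0 (hlampos T (Finset.mem_of_mem_erase h))
      · refine lt_of_lt_of_le ?_ (le_add_of_nonneg_left ha)
        rw [if_pos h]
        exact mul_pos hl0 (hmupos T (Finset.mem_of_mem_erase h))
    exact mul_pos (by positivity) hpos
  · intro i
    have s1 : ∑ T ∈ B₁.erase S, lam T * (if i ∈ T then (1:ℝ) else 0)
        = 1 - lam S * (if i ∈ S then (1:ℝ) else 0) := by
      have h : (∑ T ∈ B₁.erase S, lam T * (if i ∈ T then (1:ℝ) else 0))
          + lam S * (if i ∈ S then (1:ℝ) else 0) = 1 := by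
        rw [Finset.sum_erase_add _ _ hSB₁]; exact hlamsum i
      linarith
    have s2 : ∑ T ∈ B₂.erase Sc, mu T * (if i ∈ T then (1:ℝ) else 0)
        = 1 - mu Sc * (if i ∈ Sc then (1:ℝ) else 0) := by
      have h : (∑ T ∈ B₂.erase Sc, mu T * (if i ∈ T then (1:ℝ) else 0))
          + mu Sc * (if i ∈ Sc then (1:ℝ) else 0) = 1 := by
        rw [Finset.sum_erase_add _ _ hScB₂]; exact hmusum i
      linarith
    have t1 : ∑ T ∈ B, (mu Sc * (if T ∈ B₁.erase S then lam T else 0))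
        * (if i ∈ T then (1:ℝ) else 0)
        = mu Sc * (1 - lam S * (if i ∈ S then (1:ℝ) else 0)) := by
      rw [← s1, Finset.mul_sum,
        ← Finset.sum_subset (Finset.subset_union_left (s₂ := B₂.erase Sc))
          (fun T _ hTn => by simp [hTn])]
      exact Finset.sum_congr rfl (fun T hT => by rw [if_pos hT]; ring)
    have t2 : ∑ T ∈ B, (lam S * (if T ∈ B₂.erase Sc then mu T else 0))
        * (if i ∈ T then (1:ℝ) else 0)
        = lam S * (1 - mu Sc * (if i ∈ Sc then (1:ℝ) else 0)) := by
      rw [← s2, Finset.mul_sum,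
        ← Finset.sum_subset (Finset.subset_union_right (s₁ := B₁.erase S))
          (fun T _ hTn => by simp [hTn])]
      exact Finset.sum_congr rfl (fun T hT => by rw [if_pos hT]; ring)
    have hchi : (if i ∈ S then (1:ℝ) else 0) + (if i ∈ Sc then (1:ℝ) else 0) = 1 := by
      by_cases hi : i ∈ S <;> simp [hSc, hi]
    have key : ∑ T ∈ B, (mu Sc * (if T ∈ B₁.erase S then lam T else 0)
        + lam S * (if T ∈ B₂.erase Sc then mu T else 0)) * (if i ∈ T then (1:ℝ) else 0) = c := by
      simp_rw [add_mul]
      rw [Finset.sum_add_distrib, t1, t2, hcdef]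
      linear_combination (- (lam S * mu Sc)) * hchi
    calc ∑ T ∈ B, w T * (if i ∈ T then (1:ℝ) else 0)
        = (1/c) * ∑ T ∈ B, (mu Sc * (if T ∈ B₁.erase S then lam T else 0)
            + lam S * (if T ∈ B₂.erase Sc then mu T else 0)) * (if i ∈ T then (1:ℝ) else 0) := by
          rw [Finset.mul_sum]
          exact Finset.sum_congr rfl (fun T _ => by rw [hwdef]; ring)
      _ = (1/c) * c := by rw [key]
      _ = 1 := by field_simp

theorem stmt15 {N : Type*} [Fintype N] [DecidableEq N] (hn : 2 ≤ Fintype.card N)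
    (Q : Finset (Finset N))
    (hQ : ∀ S ∈ Q, S.Nonempty ∧ S ≠ Finset.univ)
    (hunb : Unbalanced Q)
    (hmax : ∀ Q' : Finset (Finset N), Q ⊆ Q' →
      (∀ S ∈ Q', S.Nonempty ∧ S ≠ Finset.univ) → Unbalanced Q' → Q' = Q) :
    (∀ S : Finset N, S.Nonempty → S ≠ Finset.univ →
      (S ∈ Q ↔ Finset.univ \ S ∉ Q)) ∧
    Q.card = 2 ^ (Fintype.card N - 1) - 1 := by
  have hiff : ∀ S : Finset N, S.Nonempty → S ≠ Finset.univ →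
      (S ∈ Q ↔ Finset.univ \ S ∉ Q) := by
    intro S hS hSu
    constructor
    · intro hSQ hcQ
      exact not_both_mem hunb hS hSQ hcQ
    · intro hcQ
      by_contra hSQ
      have hScne : (Finset.univ \ S).Nonempty := by
        rw [Finset.sdiff_nonempty]
        intro h
        exact hSu (Finset.univ_subset_iff.mp h)
      have hScu : Finset.univ \ S ≠ Finset.univ := by
        obtain ⟨x, hx⟩ := hS
        intro h
        have : x ∈ Finset.univ \ S := by rw [h]; exact Finset.mem_univ x
        simp [hx] at this
      have h1 : ¬ Unbalanced (insert S Q) := by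
        intro hu
        have := hmax (insert S Q) (Finset.subset_insert _ _)
          (fun T hT => by
            rcases mem_insert.mp hT with rfl | hT
            · exact ⟨hS, hSu⟩
            · exact hQ T hT) hu
        exact hSQ (this ▸ Finset.mem_insert_self S Q)
      have h2 : ¬ Unbalanced (insert (Finset.univ \ S) Q) := by
        intro hu
        have := hmax (insert (Finset.univ \ S) Q) (Finset.subset_insert _ _)
          (fun T hT => by
            rcases mem_insert.mp hT with rfl | hT
            · exact ⟨hScne, hScu⟩
            · exact hQ T hT) hu
        exact hcQ (this ▸ Finset.mem_insert_self _ Q)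
      exact combine_aux hunb hS hSu h1 h2
  refine ⟨hiff, ?_⟩
  -- cardinality
  set P : Finset (Finset N) := (Finset.univ : Finset (Finset N)) \ {∅, Finset.univ} with hPdef
  have hmemP : ∀ S : Finset N, S ∈ P ↔ S.Nonempty ∧ S ≠ Finset.univ := by
    intro S
    simp [hPdef, Finset.nonempty_iff_ne_empty, and_comm]
  have hQP : Q ⊆ P := fun S hS => (hmemP S).mpr (hQ S hS)
  have himg : Q.image (fun S => Finset.univ \ S) = P \ Q := by
    ext T
    simp only [Finset.mem_image, Finset.mem_sdiff]
    constructor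
    · rintro ⟨S, hSQ, rfl⟩
      obtain ⟨hSn, hSu⟩ := hQ S hSQ
      have hTn : (Finset.univ \ S).Nonempty := by
        rw [Finset.sdiff_nonempty]
        intro h
        exact hSu (Finset.univ_subset_iff.mp h)
      have hTu : Finset.univ \ S ≠ Finset.univ := by
        obtain ⟨x, hx⟩ := hSn
        intro h
        have : x ∈ Finset.univ \ S := by rw [h]; exact Finset.mem_univ x
        simp [hx] at this
      exact ⟨(hmemP _).mpr ⟨hTn, hTu⟩, ((hiff S hSn hSu).mp hSQ :)⟩
    · rintro ⟨hTP, hTQ⟩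
      obtain ⟨hTn, hTu⟩ := (hmemP T).mp hTP
      have hTcn : (Finset.univ \ T).Nonempty := by
        rw [Finset.sdiff_nonempty]
        intro h
        exact hTu (Finset.univ_subset_iff.mp h)
      have hTcu : Finset.univ \ T ≠ Finset.univ := by
        obtain ⟨x, hx⟩ := hTn
        intro h
        have : x ∈ Finset.univ \ T := by rw [h]; exact Finset.mem_univ x
        simp [hx] at this
      have hTT : Finset.univ \ (Finset.univ \ T) = T :=
        Finset.sdiff_sdiff_eq_self (Finset.subset_univ T)
      have : Finset.univ \ T ∈ Q := by
        by_contra h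
        exact h ((hiff _ hTcn hTcu).mpr (by rwa [hTT]))
      exact ⟨Finset.univ \ T, this, hTT⟩
  have hinj : Set.InjOn (fun S : Finset N => Finset.univ \ S) Q := by
    intro a _ b _ hab
    have ha := Finset.sdiff_sdiff_eq_self (Finset.subset_univ a)
    have hb := Finset.sdiff_sdiff_eq_self (Finset.subset_univ b)
    simp only at hab
    rw [← ha, ← hb, hab]
  have hcardimg : (Q.image (fun S => Finset.univ \ S)).card = Q.card :=
    Finset.card_image_of_injOn hinj
  have hcardsd : (P \ Q).card = P.card - Q.card := Finset.card_sdiff_of_subset hQP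
  have hPcard : P.card = 2 ^ Fintype.card N - 2 := by
    rw [hPdef, Finset.card_sdiff_of_subset (Finset.subset_univ _)]
    have hne : (∅ : Finset N) ≠ Finset.univ := by
      intro h
      have h2 : (0:ℕ) = Fintype.card N := by
        simpa using congrArg Finset.card h
      omega
    rw [Finset.card_pair hne, Finset.card_univ, Fintype.card_finset]
  have hpow : 2 ^ Fintype.card N = 2 * 2 ^ (Fintype.card N - 1) := by
    have : Fintype.card N - 1 + 1 = Fintype.card N := by omega
    conv_lhs => rw [← this]
    rw [pow_succ]; ring
  have hQle : Q.card ≤ P.card := Finset.card_le_card hQP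
  have h4 : 4 ≤ 2 ^ Fintype.card N := by
    calc (4:ℕ) = 2 ^ 2 := by norm_num
    _ ≤ 2 ^ Fintype.card N := Nat.pow_le_pow_right (by norm_num) hn
  have : Q.card = P.card - Q.card := by
    rw [← hcardsd, ← himg, hcardimg]
  omega
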